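/- A Banach space X has the coarse p-DP* property if and only if every bounded linear operator T : X → ℓ_p is completely continuous (maps weakly null sequences to norm null sequences). -/

import Mathlib

open Filter Topology Metric

noncomputable section

/-- The sequence space `ℓ_p` over `ℝ`. -/
abbrev lpS (p : ENNReal) : Type := lp (fun _ : ℕ => ℝ) p

variable {W X Y Z : Type*}

/-- A set `A ⊆ X` is coarse `p`-limited if every bounded operator `T : X → ℓ_p`
maps `A` to a relatively compact subset of `ℓ_p`. -/
def CoarsePLimited (p : ENNReal) [Fact (1 ≤ p)]
    [NormedAddCommGroup X] [NormedSpace ℝ X] (A : Set X) : Prop :=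
  ∀ T : X →L[ℝ] lpS p, IsCompact (closure (T '' A))

/-- A sequence is weakly null if every continuous functional sends it to a null sequence. -/
def WeaklyNull [NormedAddCommGroup X] [NormedSpace ℝ X] (x : ℕ → X) : Prop :=
  ∀ f : X →L[ℝ] ℝ, Tendsto (fun n => f (x n)) atTop (𝓝 0)

/-- A sequence is weakly Cauchy if every continuous functional sends it to a Cauchy sequence. -/
def WeaklyCauchy [NormedAddCommGroup X] [NormedSpace ℝ X] (x : ℕ → X) : Prop :=
  ∀ f : X →L[ℝ] ℝ, CauchySeq (fun n => f (x n))

/-- A set is conditionally weakly compact if every sequence in it has a weakly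
Cauchy subsequence. -/
def CondWeaklyCompact [NormedAddCommGroup X] [NormedSpace ℝ X] (A : Set X) : Prop :=
  ∀ x : ℕ → X, (∀ n, x n ∈ A) → ∃ φ : ℕ → ℕ, StrictMono φ ∧ WeaklyCauchy (x ∘ φ)

/-- A set is relatively weakly compact if its closure in the weak topology is compact. -/
def RelWeaklyCompact [NormedAddCommGroup X] [NormedSpace ℝ X] (A : Set X) : Prop :=
  IsCompact (closure ((toWeakSpaceCLM ℝ X) '' A))

/-- A Banach space has the coarse `p`-DP* property if every relatively weakly compact
subset is coarse `p`-limited. -/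
def CoarsePDPstar (p : ENNReal) [Fact (1 ≤ p)] (X : Type*)
    [NormedAddCommGroup X] [NormedSpace ℝ X] : Prop :=
  ∀ A : Set X, RelWeaklyCompact A → CoarsePLimited p A

/-- A Banach space has the coarse `p`-Gelfand-Phillips property if every coarse
`p`-limited subset is relatively compact. -/
def CoarsePGP (p : ENNReal) [Fact (1 ≤ p)] (X : Type*)
    [NormedAddCommGroup X] [NormedSpace ℝ X] : Prop :=
  ∀ A : Set X, CoarsePLimited p A → IsCompact (closure A)

/-- A set `A` is limited if every weak*-null sequence of functionals converges to `0`
uniformly on `A`. -/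
def LimitedSet [NormedAddCommGroup X] [NormedSpace ℝ X] (A : Set X) : Prop :=
  ∀ f : ℕ → (X →L[ℝ] ℝ), (∀ x : X, Tendsto (fun n => f n x) atTop (𝓝 0)) →
    TendstoUniformlyOn (fun n x => f n x) 0 atTop A

/-- A set `A` is `p`-limited if for every weak* `p`-summable sequence `(f n)` of
functionals there is `a ∈ ℓ_p` with `|f n x| ≤ a n` for all `x ∈ A` and all `n`. -/
def PLimitedSet (p : ENNReal) [NormedAddCommGroup X] [NormedSpace ℝ X] (A : Set X) : Prop :=
  ∀ f : ℕ → (X →L[ℝ] ℝ), (∀ x : X, Memℓp (fun n => f n x) p) →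
    ∃ a : ℕ → ℝ, Memℓp a p ∧ ∀ x ∈ A, ∀ n, |f n x| ≤ a n

/-- A sequence of vectors has norm-null if its norms tend to zero. -/
def NormNull [NormedAddCommGroup X] (x : ℕ → X) : Prop :=
  Tendsto (fun n => ‖x n‖) atTop (𝓝 0)

/-- The Schur property: weakly null sequences are norm null. -/
def SchurProp (X : Type*) [NormedAddCommGroup X] [NormedSpace ℝ X] : Prop :=
  ∀ x : ℕ → X, WeaklyNull x → NormNull x

/-- A coarse `p`-limited operator: the image of the unit ball is coarse `p`-limited. -/
def CoarsePLimOp (p : ENNReal) [Fact (1 ≤ p)] [NormedAddCommGroup X] [NormedSpace ℝ X]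
    [NormedAddCommGroup Y] [NormedSpace ℝ Y] (T : X →L[ℝ] Y) : Prop :=
  CoarsePLimited p (T '' closedBall (0 : X) 1)

/-- A weakly compact operator: the image of the unit ball is relatively weakly compact. -/
def WeaklyCompactOp [NormedAddCommGroup X] [NormedSpace ℝ X]
    [NormedAddCommGroup Y] [NormedSpace ℝ Y] (T : X →L[ℝ] Y) : Prop :=
  RelWeaklyCompact (T '' closedBall (0 : X) 1)

/-- A compact operator: the image of the unit ball is relatively compact. -/
def CompactOp [NormedAddCommGroup X] [NormedSpace ℝ X]
    [NormedAddCommGroup Y] [NormedSpace ℝ Y] (T : X →L[ℝ] Y) : Prop :=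
  IsCompact (closure (T '' closedBall (0 : X) 1))

/-- `X` contains an isomorphic copy of `ℓ₁`. -/
def ContainsL1 (X : Type*) [NormedAddCommGroup X] [NormedSpace ℝ X] : Prop :=
  ∃ T : lpS 1 →L[ℝ] X, ∃ c : ℝ, 0 < c ∧ ∀ v : lpS 1, c * ‖v‖ ≤ ‖T v‖


section AuxSeqCompact

variable [NormedAddCommGroup X] [NormedSpace ℝ X]

lemma weak_pairing_injective : Function.Injective ((topDualPairing ℝ X).flip) := by
  intro u v huv
  have h : ∀ f : StrongDual ℝ X, f (u - v) = 0 := by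
    intro f
    have := LinearMap.congr_fun huv f
    simp only [LinearMap.flip_apply, topDualPairing_apply] at this
    simp [map_sub, this]
  exact sub_eq_zero.mp (NormedSpace.eq_zero_of_forall_dual_eq_zero ℝ h)

lemma weak_eval_cont (f : X →L[ℝ] ℝ) :
    Continuous fun w : WeakSpace ℝ X => f ((toWeakSpace ℝ X).symm w) :=
  WeakBilin.eval_continuous ((topDualPairing ℝ X).flip) f

lemma tendsto_toWeakSpace_of_dual {x : ℕ → X} {a : X}
    (h : ∀ f : X →L[ℝ] ℝ, Tendsto (fun n => f (x n)) atTop (𝓝 (f a))) :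
    Tendsto (fun n => toWeakSpace ℝ X (x n)) atTop (𝓝 (toWeakSpace ℝ X a)) := by
  refine (WeakBilin.tendsto_iff_forall_eval_tendsto (B := (topDualPairing ℝ X).flip) weak_pairing_injective).mpr ?_
  intro f
  exact h f

lemma submodule_weak_closed (Y : Submodule ℝ X) (hYc : IsClosed (Y : Set X)) :
    IsClosed {w : WeakSpace ℝ X | (toWeakSpace ℝ X).symm w ∈ Y} := by
  rw [← isOpen_compl_iff, isOpen_iff_mem_nhds]
  intro w₀ hw₀
  have hx₀ : (toWeakSpace ℝ X).symm w₀ ∉ Y := hw₀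
  obtain ⟨g, u, hgu, hgx⟩ := geometric_hahn_banach_closed_point Y.convex hYc hx₀
  have hg0 : ∀ b ∈ Y, g b = 0 := by
    intro b hb
    by_contra hgb
    have ht : g (((u+1)/(g b)) • b) < u := hgu _ (Y.smul_mem _ hb)
    rw [map_smul, smul_eq_mul, div_mul_cancel₀ _ hgb] at ht
    linarith
  have hu : 0 < u := by simpa using hgu 0 Y.zero_mem
  have hopen : IsOpen ((fun w : WeakSpace ℝ X => g ((toWeakSpace ℝ X).symm w)) ⁻¹' Set.Ioi u) :=
    (isOpen_Ioi).preimage (weak_eval_cont g)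
  apply Filter.mem_of_superset (hopen.mem_nhds (by simpa using hgx))
  intro w hw hwS
  have h0 : g ((toWeakSpace ℝ X).symm w) = 0 := hg0 _ hwS
  simp only [Set.mem_preimage, Set.mem_Ioi] at hw
  rw [h0] at hw
  linarith

lemma dual_separation (Y : Submodule ℝ X) (z : ℕ → X) (hYz : (Y : Set X) ⊆ closure (Set.range z))
    (f : ℕ → X →L[ℝ] ℝ) (hf1 : ∀ i, ‖f i‖ ≤ 1) (hf2 : ∀ i, f i (z i) = ‖z i‖) :
    ∀ u v : X, u ∈ Y → v ∈ Y → (∀ i, f i u = f i v) → u = v := by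
  intro u v hu hv h
  by_contra hne
  set w := u - v with hwdef
  have hw : w ≠ 0 := sub_ne_zero.mpr hne
  have hwY : w ∈ Y := Y.sub_mem hu hv
  have hwn : (0:ℝ) < ‖w‖ := norm_pos_iff.mpr hw
  have hwc : w ∈ closure (Set.range z) := hYz hwY
  rw [Metric.mem_closure_iff] at hwc
  obtain ⟨b, ⟨i, rfl⟩, hb⟩ := hwc (‖w‖/3) (by linarith)
  have hdist : ‖z i - w‖ < ‖w‖/3 := by rw [← dist_eq_norm, dist_comm]; exact hb
  have h0 : f i w = 0 := by rw [hwdef, map_sub, h i, sub_self]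
  have hzi : ‖w‖ - ‖w‖/3 ≤ ‖z i‖ := by
    have := norm_sub_norm_le w (z i)
    have h2 : ‖w - z i‖ < ‖w‖/3 := by rwa [norm_sub_rev]
    linarith
  have hfb : |f i (z i - w)| ≤ ‖z i - w‖ := by
    calc |f i (z i - w)| ≤ ‖f i‖ * ‖z i - w‖ := (f i).le_opNorm _
    _ ≤ 1 * ‖z i - w‖ := mul_le_mul_of_nonneg_right (hf1 i) (norm_nonneg _)
    _ = ‖z i - w‖ := one_mul _
  have key : f i (z i - w) = f i (z i) - f i w := map_sub _ _ _
  rw [h0, hf2 i, sub_zero] at key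
  have hle := le_abs_self (f i (z i - w))
  linarith

/-- Weak sequential compactness: a sequence whose weak closure is weakly compact has
a weakly convergent subsequence. -/
lemma weak_seq_compact (a : ℕ → X)
    (hK : IsCompact (closure (Set.range fun n => toWeakSpace ℝ X (a n)))) :
    ∃ (x : X) (φ : ℕ → ℕ), StrictMono φ ∧
      toWeakSpace ℝ X x ∈ closure (Set.range fun n => toWeakSpace ℝ X (a n)) ∧
      ∀ f : X →L[ℝ] ℝ, Tendsto (fun n => f (a (φ n))) atTop (𝓝 (f x)) := by
  set K₀ := closure (Set.range fun n => toWeakSpace ℝ X (a n)) with hK₀def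
  set Y : Submodule ℝ X := (Submodule.span ℝ (Set.range a)).topologicalClosure with hYdef
  have hYc : IsClosed (Y : Set X) := Submodule.isClosed_topologicalClosure _
  have hYsep : TopologicalSpace.IsSeparable (Y : Set X) := by
    have h1 : TopologicalSpace.IsSeparable (Submodule.span ℝ (Set.range a) : Set X) :=
      TopologicalSpace.IsSeparable.span ((Set.countable_range a).isSeparable)
    have : (Y : Set X) = closure (Submodule.span ℝ (Set.range a) : Set X) := by
      rw [hYdef]; rfl
    rw [this]
    exact h1.closure
  obtain ⟨c, hcc, hYsub⟩ := hYsep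
  have hcne : c.Nonempty := by
    rcases Set.eq_empty_or_nonempty c with rfl | h
    · exfalso
      have := hYsub Y.zero_mem
      simp at this
    · exact h
  obtain ⟨z, rfl⟩ := hcc.exists_eq_range hcne
  choose f hf1 hf2 using fun i => exists_dual_vector'' ℝ (z i)
  have hf2' : ∀ i, f i (z i) = ‖z i‖ := by
    intro i; rw [hf2 i]; norm_num
  have sep := dual_separation Y z hYsub f hf1 hf2'
  set S := {w : WeakSpace ℝ X | (toWeakSpace ℝ X).symm w ∈ Y} with hSdef
  have hS : IsClosed S := submodule_weak_closed Y hYc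
  have hK₀S : K₀ ⊆ S := by
    apply closure_minimal _ hS
    rintro _ ⟨n, rfl⟩
    show (toWeakSpace ℝ X).symm (toWeakSpace ℝ X (a n)) ∈ Y
    rw [LinearEquiv.symm_apply_apply]
    exact Submodule.le_topologicalClosure _ (Submodule.subset_span (Set.mem_range_self n))
  haveI : CompactSpace ↥K₀ := isCompact_iff_compactSpace.mp hK
  set Φ : ↥K₀ → (ℕ → ℝ) := fun w i => f i ((toWeakSpace ℝ X).symm w.1) with hΦdef
  have hΦc : Continuous Φ :=
    continuous_pi fun i => (weak_eval_cont (f i)).comp continuous_subtype_val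
  have hΦi : Function.Injective Φ := by
    intro w₁ w₂ hw
    apply Subtype.ext
    have h1 := sep _ _ (hK₀S w₁.2) (hK₀S w₂.2) (fun i => congrFun hw i)
    exact (toWeakSpace ℝ X).symm.injective h1
  have hemb := hΦc.isClosedEmbedding hΦi
  haveI : TopologicalSpace.MetrizableSpace ↥K₀ := hemb.toIsEmbedding.metrizableSpace
  have hu : ∀ n, (⟨toWeakSpace ℝ X (a n), subset_closure (Set.mem_range_self n)⟩ : ↥K₀) ∈ Set.univ :=
    fun n => Set.mem_univ _
  obtain ⟨b, -, φ, hφ, hconv⟩ := isCompact_univ.tendsto_subseq hu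
  have hval : Tendsto (fun n => ((⟨toWeakSpace ℝ X (a (φ n)), subset_closure (Set.mem_range_self _)⟩ : ↥K₀) : WeakSpace ℝ X)) atTop (𝓝 (b : WeakSpace ℝ X)) :=
    ((continuous_subtype_val.tendsto b).comp hconv)
  refine ⟨(toWeakSpace ℝ X).symm (b : WeakSpace ℝ X), φ, hφ, ?_, ?_⟩
  · rw [LinearEquiv.apply_symm_apply]
    exact b.2
  · intro g
    have := ((weak_eval_cont g).tendsto (b : WeakSpace ℝ X)).comp hval
    simpa [Function.comp_def] using this


end AuxSeqCompact

set_option maxHeartbeats 1000000 in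
set_option synthInstance.maxHeartbeats 1000000 in
theorem stmt12 (p : ENNReal) [Fact (1 ≤ p)] (hp : p ≠ ⊤)
    [NormedAddCommGroup X] [NormedSpace ℝ X] [CompleteSpace X] :
    CoarsePDPstar p X ↔
      ∀ T : X →L[ℝ] lpS p, ∀ x : ℕ → X, WeaklyNull x → NormNull (fun n => T (x n)) := by
  constructor
  · -- coarse p-DP* implies every operator into ℓ_p is completely continuous
    intro hDP T x hx
    haveI hT2 : T2Space (WeakSpace ℝ X) :=
      (WeakBilin.isEmbedding weak_pairing_injective).t2Space
    set A : Set X := insert 0 (Set.range x) with hAdef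
    have h0 : Tendsto (fun n => toWeakSpace ℝ X (x n)) atTop (𝓝 (toWeakSpace ℝ X 0)) := by
      apply tendsto_toWeakSpace_of_dual
      intro f
      simpa using hx f
    have hc : IsCompact (insert (toWeakSpace ℝ X 0) (Set.range fun n => toWeakSpace ℝ X (x n))) :=
      h0.isCompact_insert_range
    have him : (toWeakSpaceCLM ℝ X) '' A
        = insert (toWeakSpace ℝ X 0) (Set.range fun n => toWeakSpace ℝ X (x n)) := by
      rw [hAdef, Set.image_insert_eq, ← Set.range_comp]
      rfl
    have hRWC : RelWeaklyCompact A := by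
      unfold RelWeaklyCompact
      rw [him, hc.isClosed.closure_eq]
      exact hc
    have hcl : IsCompact (closure (T '' A)) := hDP A hRWC T
    set y : ℕ → lpS p := fun n => T (x n) with hydef
    show Tendsto (fun n => ‖y n‖) atTop (𝓝 0)
    have hmem : ∀ n, y n ∈ closure (T '' A) :=
      fun n => subset_closure ⟨x n, Set.mem_insert_of_mem _ ⟨n, rfl⟩, rfl⟩
    have hwy : ∀ g : StrongDual ℝ (lpS p), Tendsto (fun n => g (y n)) atTop (𝓝 0) := by
      intro g
      simpa using hx (g.comp T)
    by_contra hnn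
    rw [Metric.tendsto_atTop] at hnn
    push_neg at hnn
    obtain ⟨ε, hε, hfreq⟩ := hnn
    have hfr : ∃ᶠ n in atTop, ε ≤ ‖y n‖ := by
      rw [Filter.frequently_atTop]
      intro N
      obtain ⟨n, hn, h⟩ := hfreq N
      refine ⟨n, hn, ?_⟩
      rw [Real.dist_0_eq_abs, abs_norm] at h
      exact h
    obtain ⟨ψ, hψ, hψε⟩ := Filter.extraction_of_frequently_atTop hfr
    obtain ⟨z, hz, φ', hφ', hzt⟩ := hcl.tendsto_subseq (fun n => hmem (ψ n))
    have hz0 : z = 0 := by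
      apply NormedSpace.eq_zero_of_forall_dual_eq_zero ℝ
      intro g
      have h1 : Tendsto (fun n => g (y (ψ (φ' n)))) atTop (𝓝 (g z)) :=
        (g.continuous.tendsto z).comp hzt
      have h2 : Tendsto (fun n => g (y (ψ (φ' n)))) atTop (𝓝 0) :=
        (hwy g).comp ((hψ.comp hφ').tendsto_atTop)
      exact tendsto_nhds_unique h1 h2
    have hnorm : Tendsto (fun n => ‖y (ψ (φ' n))‖) atTop (𝓝 ‖z‖) :=
      (continuous_norm.tendsto z).comp hzt
    have hfin : ε ≤ ‖z‖ :=
      le_of_tendsto_of_tendsto' tendsto_const_nhds hnorm (fun n => hψε (φ' n))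
    rw [hz0, norm_zero] at hfin
    linarith
  · -- complete continuity of all operators into ℓ_p implies coarse p-DP*
    intro hCC A hA T
    have hK : IsCompact (closure ((toWeakSpaceCLM ℝ X) '' A)) := hA
    set K := closure ((toWeakSpaceCLM ℝ X) '' A) with hKdef
    set C : Set (lpS p) := (fun w : WeakSpace ℝ X => T ((toWeakSpace ℝ X).symm w)) '' K with hCdef
    have hTA : T '' A ⊆ C := by
      rintro _ ⟨a, haA, rfl⟩
      refine ⟨toWeakSpaceCLM ℝ X a, subset_closure ⟨a, haA, rfl⟩, ?_⟩
      show T ((toWeakSpace ℝ X).symm (toWeakSpaceCLM ℝ X a)) = T a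
      rw [toWeakSpaceCLM_eq_toWeakSpace, LinearEquiv.symm_apply_apply]
    have hCseq : IsSeqCompact C := by
      intro y hy
      choose k hk hyk using hy
      set a : ℕ → X := fun n => (toWeakSpace ℝ X).symm (k n) with hadef
      have hka : ∀ n, toWeakSpace ℝ X (a n) = k n :=
        fun n => (toWeakSpace ℝ X).apply_symm_apply (k n)
      have hsubK : closure (Set.range fun n => toWeakSpace ℝ X (a n)) ⊆ K := by
        apply closure_minimal _ isClosed_closure
        rintro _ ⟨n, rfl⟩
        show (toWeakSpace ℝ X) (a n) ∈ K
        rw [hka]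
        exact hk n
      have hK₀ : IsCompact (closure (Set.range fun n => toWeakSpace ℝ X (a n))) :=
        hK.of_isClosed_subset isClosed_closure hsubK
      obtain ⟨x, φ, hφ, hxm, hconv⟩ := weak_seq_compact a hK₀
      refine ⟨T x, ⟨toWeakSpace ℝ X x, hsubK hxm, by
        show T ((toWeakSpace ℝ X).symm ((toWeakSpace ℝ X) x)) = T x
        rw [LinearEquiv.symm_apply_apply]⟩, φ, hφ, ?_⟩
      have hwnull : WeaklyNull (fun n => a (φ n) - x) := by
        intro f
        have := (hconv f).sub (tendsto_const_nhds (x := f x))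
        simpa [map_sub] using this
      have hnn := hCC T _ hwnull
      have h2 : Tendsto (fun n => T (a (φ n))) atTop (𝓝 (T x)) := by
        rw [tendsto_iff_norm_sub_tendsto_zero]
        simpa [map_sub, NormNull] using hnn
      have hyeq : (y ∘ φ) = fun n => T (a (φ n)) := funext fun n => (hyk (φ n)).symm
      rw [hyeq]
      exact h2
    have hCcomp : IsCompact C := hCseq.isCompact
    exact hCcomp.of_isClosed_subset isClosed_closure (closure_minimal hTA hCcomp.isClosed)
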